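/- arXiv:1507.05535 — 3 statements merged into one kernel-verified Lean document; each statement's English description precedes it below -/
import Mathlib

section
/- Let Z and N be independent real random variables on a probability space, where Z is Gaussian with mean 0 and variance σ_z² > 0 and N is integrable with E[N] = 0. Let a ∈ ℝ and set W = a·Z + N. Let f : ℝ → ℝ be differentiable such that f(Z), Z·f(Z), and f'(Z) are integrable and f(x)·exp(−x²/(2σ_z²)) → 0 as x → ±∞. Then E[f(Z)·W] = E[f'(Z)] · E[Z·W]. -/
open MeasureTheory ProbabilityTheory Filter Real Asymptotics
open scoped NNReal ENNReal

namespace BussgangAux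

lemma hasDerivAt_gauss {v : ℝ} (hv : v ≠ 0) (x : ℝ) :
    HasDerivAt (fun x : ℝ => Real.exp (-x ^ 2 / (2 * v)))
      ((-x / v) * Real.exp (-x ^ 2 / (2 * v))) x := by
  have h1 : HasDerivAt (fun x : ℝ => -x ^ 2 / (2 * v)) (-x / v) x := by
    have h := ((hasDerivAt_pow 2 x).neg).div_const (2 * v)
    refine h.congr_deriv ?_
    field_simp
    ring
  have h2 := h1.exp
  convert h2 using 1
  ring

lemma stein_volume {v : ℝ} (hv : 0 < v) (f : ℝ → ℝ) (hf : Differentiable ℝ f)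
    (h1 : Integrable (fun x => x * f x * Real.exp (-x ^ 2 / (2 * v))))
    (h2 : Integrable (fun x => deriv f x * Real.exp (-x ^ 2 / (2 * v))))
    (htop : Tendsto (fun x => f x * Real.exp (-x ^ 2 / (2 * v))) atTop (nhds 0))
    (hbot : Tendsto (fun x => f x * Real.exp (-x ^ 2 / (2 * v))) atBot (nhds 0)) :
    ∫ x, x * f x * Real.exp (-x ^ 2 / (2 * v)) =
      v * ∫ x, deriv f x * Real.exp (-x ^ 2 / (2 * v)) := by
  set g := fun x : ℝ => Real.exp (-x ^ 2 / (2 * v)) with hgdef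
  have hgd : ∀ x, HasDerivAt g ((-x / v) * g x) x := fun x => hasDerivAt_gauss hv.ne' x
  have hfd : ∀ x, HasDerivAt f (deriv f x) x := fun x => (hf x).hasDerivAt
  have huv' : Integrable (f * fun x => (-x / v) * g x) := by
    have heq : (f * fun x => (-x / v) * g x)
        = fun x => (-(1 / v)) * (x * f x * g x) := by
      funext x
      simp only [Pi.mul_apply]
      rw [div_eq_mul_inv, one_div]
      ring
    rw [heq]
    exact h1.const_mul _
  have hu'v : Integrable (deriv f * g) := h2
  have key := integral_mul_deriv_eq_deriv_mul (fun x _ => hfd x) (fun x _ => hgd x) huv' hu'v hbot htop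
  have hL : ∫ x, f x * ((-x / v) * g x) = (-(1 / v)) * ∫ x, x * f x * g x := by
    rw [← integral_const_mul]
    congr 1
    funext x
    rw [div_eq_mul_inv, one_div]
    ring
  rw [hL] at key
  simp only [sub_zero, zero_sub] at key
  have hv' : v ≠ 0 := hv.ne'
  field_simp at key
  linarith [key]

lemma integral_gaussianReal_eq {v : ℝ≥0} (hv : v ≠ 0) (φ : ℝ → ℝ) :
    ∫ x, φ x ∂(gaussianReal 0 v) = ∫ x, gaussianPDFReal 0 v x * φ x := by
  rw [gaussianReal_of_var_ne_zero _ hv, gaussianPDF_def]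
  rw [show (fun x => ENNReal.ofReal (gaussianPDFReal 0 v x))
      = (fun x => ((gaussianPDFReal 0 v x).toNNReal : ℝ≥0∞)) from rfl]
  rw [integral_withDensity_eq_integral_smul ((measurable_gaussianPDFReal 0 v).real_toNNReal) φ]
  congr 1
  funext x
  simp [NNReal.smul_def, Real.coe_toNNReal _ (gaussianPDFReal_nonneg 0 v x)]

lemma integrable_gaussianReal_iff {v : ℝ≥0} (hv : v ≠ 0) (φ : ℝ → ℝ) :
    Integrable φ (gaussianReal 0 v) ↔ Integrable (fun x => φ x * gaussianPDFReal 0 v x) := by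
  rw [gaussianReal_of_var_ne_zero _ hv, gaussianPDF_def,
    integrable_withDensity_iff ((measurable_gaussianPDFReal 0 v).ennreal_ofReal)
      (ae_of_all _ fun x => ENNReal.ofReal_lt_top)]
  simp_rw [ENNReal.toReal_ofReal (gaussianPDFReal_nonneg 0 v _)]

lemma gaussianPDFReal_zero_eq (v : ℝ≥0) (x : ℝ) :
    gaussianPDFReal 0 v x = (√(2 * π * (v : ℝ)))⁻¹ * Real.exp (-x ^ 2 / (2 * (v : ℝ))) := by
  simp [gaussianPDFReal, sub_zero]

lemma integrable_gauss_of_vol {v : ℝ≥0} (hv : v ≠ 0) (φ : ℝ → ℝ)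
    (h : Integrable (fun x => φ x * Real.exp (-x ^ 2 / (2 * (v : ℝ))))) :
    Integrable φ (gaussianReal 0 v) := by
  rw [integrable_gaussianReal_iff hv]
  have heq : (fun x => φ x * gaussianPDFReal 0 v x)
      = fun x => (√(2 * π * (v : ℝ)))⁻¹ * (φ x * Real.exp (-x ^ 2 / (2 * (v : ℝ)))) := by
    funext x
    rw [gaussianPDFReal_zero_eq]
    ring
  rw [heq]
  exact h.const_mul _

lemma integrable_pow_mul_gauss {v : ℝ} (hv : 0 < v) (n : ℕ) :
    Integrable (fun x : ℝ => x ^ n * Real.exp (-x ^ 2 / (2 * v))) := by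
  have hb : 0 < (2 * v)⁻¹ := by positivity
  have h := integrable_rpow_mul_exp_neg_mul_sq hb
    (s := (n : ℝ)) (lt_of_lt_of_le neg_one_lt_zero (Nat.cast_nonneg n))
  have heq : (fun x : ℝ => x ^ ((n : ℝ)) * Real.exp (-(2 * v)⁻¹ * x ^ 2))
      = fun x : ℝ => x ^ n * Real.exp (-x ^ 2 / (2 * v)) := by
    funext x
    rw [Real.rpow_natCast]
    congr 1
    ring
  rwa [heq] at h

lemma tendsto_id_mul_gauss_atTop {v : ℝ} (hv : 0 < v) :
    Tendsto (fun x : ℝ => x * Real.exp (-x ^ 2 / (2 * v))) atTop (nhds 0) := by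
  have hb : 0 < (2 * v)⁻¹ := by positivity
  have h := (rpow_mul_exp_neg_mul_sq_isLittleO_exp_neg hb 1).isBigO.trans_tendsto ?_
  · have heq : (fun x : ℝ => x ^ ((1 : ℝ)) * Real.exp (-(2 * v)⁻¹ * x ^ 2))
        = fun x : ℝ => x * Real.exp (-x ^ 2 / (2 * v)) := by
      funext x
      rw [Real.rpow_one]
      congr 1
      ring
    rwa [heq] at h
  · have hneg : Tendsto (fun x : ℝ => -(1 / 2) * x) atTop atBot :=
      Tendsto.const_mul_atTop_of_neg (by norm_num) tendsto_id
    exact Real.tendsto_exp_atBot.comp hneg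

lemma tendsto_id_mul_gauss_atBot {v : ℝ} (hv : 0 < v) :
    Tendsto (fun x : ℝ => x * Real.exp (-x ^ 2 / (2 * v))) atBot (nhds 0) := by
  have h := ((tendsto_id_mul_gauss_atTop hv).comp tendsto_neg_atBot_atTop).neg
  simp only [Function.comp_def, neg_neg, neg_zero] at h
  convert h using 2 with x
  rw [neg_sq]
  ring

lemma stein_gauss {v : ℝ≥0} (hv : v ≠ 0) (f : ℝ → ℝ) (hf : Differentiable ℝ f)
    (hixf : Integrable (fun x => x * f x) (gaussianReal 0 v))
    (hif' : Integrable (fun x => deriv f x) (gaussianReal 0 v))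
    (htop : Tendsto (fun x => f x * Real.exp (-x ^ 2 / (2 * (v : ℝ)))) atTop (nhds 0))
    (hbot : Tendsto (fun x => f x * Real.exp (-x ^ 2 / (2 * (v : ℝ)))) atBot (nhds 0)) :
    ∫ x, x * f x ∂(gaussianReal 0 v) = (v : ℝ) * ∫ x, deriv f x ∂(gaussianReal 0 v) := by
  have hvpos : (0 : ℝ) < (v : ℝ) := by positivity
  set c : ℝ := (√(2 * π * (v : ℝ)))⁻¹ with hcdef
  have hcpos : 0 < c := by
    rw [hcdef]
    positivity
  have hx1 : Integrable (fun x => x * f x * Real.exp (-x ^ 2 / (2 * (v : ℝ)))) := by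
    have h := ((integrable_gaussianReal_iff hv _).mp hixf).const_mul c⁻¹
    have heq : (fun x => c⁻¹ * ((x * f x) * gaussianPDFReal 0 v x))
        = fun x => x * f x * Real.exp (-x ^ 2 / (2 * (v : ℝ))) := by
      funext x
      rw [gaussianPDFReal_zero_eq, ← hcdef]
      field_simp
    rwa [heq] at h
  have hx2 : Integrable (fun x => deriv f x * Real.exp (-x ^ 2 / (2 * (v : ℝ)))) := by
    have h := ((integrable_gaussianReal_iff hv _).mp hif').const_mul c⁻¹
    have heq : (fun x => c⁻¹ * (deriv f x * gaussianPDFReal 0 v x))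
        = fun x => deriv f x * Real.exp (-x ^ 2 / (2 * (v : ℝ))) := by
      funext x
      rw [gaussianPDFReal_zero_eq, ← hcdef]
      field_simp
    rwa [heq] at h
  have hstein := stein_volume hvpos f hf hx1 hx2 htop hbot
  rw [integral_gaussianReal_eq hv, integral_gaussianReal_eq hv]
  have hL : (fun x => gaussianPDFReal 0 v x * (x * f x))
      = fun x => c * (x * f x * Real.exp (-x ^ 2 / (2 * (v : ℝ)))) := by
    funext x
    rw [gaussianPDFReal_zero_eq, ← hcdef]
    ring
  have hR : (fun x => gaussianPDFReal 0 v x * deriv f x)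
      = fun x => c * (deriv f x * Real.exp (-x ^ 2 / (2 * (v : ℝ)))) := by
    funext x
    rw [gaussianPDFReal_zero_eq, ← hcdef]
    ring
  rw [hL, hR, integral_const_mul, integral_const_mul, hstein]
  ring

end BussgangAux

section Main

open BussgangAux

/-- Cross-correlation form of Bussgang's theorem: for `Z` centered Gaussian,
`N` independent of `Z` with zero mean, and `W = a•Z + N`,
`E[f(Z)·W] = E[f'(Z)] · E[Z·W]`. -/
theorem bussgang_cross_correlation
    {Ω : Type*} [MeasureSpace Ω] [IsProbabilityMeasure (ℙ : Measure Ω)]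
    (σz : ℝ) (hσz : 0 < σz ^ 2)
    (Z N : Ω → ℝ) (hZ : Measurable Z) (hN : Measurable N)
    (hindep : IndepFun Z N ℙ)
    (hZlaw : Measure.map Z ℙ = gaussianReal 0 ⟨σz ^ 2, sq_nonneg σz⟩)
    (hNint : Integrable N ℙ) (hNmean : ∫ ω, N ω ∂ℙ = 0)
    (a : ℝ) (W : Ω → ℝ) (hW : W = fun ω => a * Z ω + N ω)
    (f : ℝ → ℝ) (hf : Differentiable ℝ f)
    (hint1 : Integrable (fun ω => f (Z ω)) ℙ)
    (hint2 : Integrable (fun ω => Z ω * f (Z ω)) ℙ)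
    (hint3 : Integrable (fun ω => deriv f (Z ω)) ℙ)
    (htop : Tendsto (fun x => f x * Real.exp (-x ^ 2 / (2 * σz ^ 2))) atTop (nhds 0))
    (hbot : Tendsto (fun x => f x * Real.exp (-x ^ 2 / (2 * σz ^ 2))) atBot (nhds 0)) :
    ∫ ω, f (Z ω) * W ω ∂ℙ = (∫ ω, deriv f (Z ω) ∂ℙ) * ∫ ω, Z ω * W ω ∂ℙ := by
  subst hW
  set v : ℝ≥0 := ⟨σz ^ 2, sq_nonneg σz⟩ with hvdef
  have hvR : (v : ℝ) = σz ^ 2 := rfl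
  have hvne : v ≠ 0 := by
    intro h
    apply hσz.ne'
    rw [← hvR, h, NNReal.coe_zero]
  have hfm : Measurable f := hf.continuous.measurable
  -- transport of integrals and integrability through the law of Z
  have hmap : ∀ φ : ℝ → ℝ, AEStronglyMeasurable φ (gaussianReal 0 v) →
      ∫ ω, φ (Z ω) ∂ℙ = ∫ x, φ x ∂(gaussianReal 0 v) := by
    intro φ hφ
    rw [← hZlaw] at hφ ⊢
    exact (integral_map hZ.aemeasurable hφ).symm
  have hintmap : ∀ φ : ℝ → ℝ, AEStronglyMeasurable φ (gaussianReal 0 v) →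
      (Integrable φ (gaussianReal 0 v) ↔ Integrable (fun ω => φ (Z ω)) ℙ) := by
    intro φ hφ
    rw [← hZlaw] at hφ ⊢
    exact integrable_map_measure hφ hZ.aemeasurable
  -- integrability of Z and Z^2
  have hid : Integrable (fun x : ℝ => x) (gaussianReal 0 v) := by
    apply integrable_gauss_of_vol hvne
    have := integrable_pow_mul_gauss hσz 1
    simpa [hvR] using this
  have hsq : Integrable (fun x : ℝ => x * x) (gaussianReal 0 v) := by
    apply integrable_gauss_of_vol hvne
    have h2 := integrable_pow_mul_gauss hσz 2
    have heq : (fun x : ℝ => x ^ 2 * Real.exp (-x ^ 2 / (2 * σz ^ 2)))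
        = fun x : ℝ => (x * x) * Real.exp (-x ^ 2 / (2 * (v : ℝ))) := by
      funext x
      rw [hvR, sq]
    rwa [heq] at h2
  have hone : Integrable (fun _ : ℝ => (1 : ℝ)) (gaussianReal 0 v) := integrable_const 1
  have hZint : Integrable Z ℙ :=
    (hintmap (fun x => x) aestronglyMeasurable_id).mp hid
  have hZZint : Integrable (fun ω => Z ω * Z ω) ℙ :=
    (hintmap (fun x => x * x) (measurable_id.mul measurable_id).aestronglyMeasurable).mp hsq
  -- second moment of Z via Stein's lemma with f = id
  have hEZ2 : ∫ x, x * x ∂(gaussianReal 0 v) = σz ^ 2 := by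
    have hderiv1 : deriv (fun x : ℝ => x) = fun _ => (1 : ℝ) := by
      funext x
      simp
    have h := stein_gauss hvne (fun x => x) differentiable_fun_id hsq
      (by rw [hderiv1]; exact hone)
      (by simpa [hvR] using tendsto_id_mul_gauss_atTop hσz)
      (by simpa [hvR] using tendsto_id_mul_gauss_atBot hσz)
    rw [hderiv1] at h
    simp only [integral_const, measure_univ, ENNReal.toReal_one, probReal_univ, smul_eq_mul, one_mul,
      mul_one] at h
    rw [h, hvR]
  -- Stein's lemma for f
  have hsm_xf : AEStronglyMeasurable (fun x => x * f x) (gaussianReal 0 v) :=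
    (measurable_id.mul hfm).aestronglyMeasurable
  have hsm_f' : AEStronglyMeasurable (fun x => deriv f x) (gaussianReal 0 v) :=
    (measurable_deriv f).aestronglyMeasurable
  have hixf : Integrable (fun x => x * f x) (gaussianReal 0 v) :=
    (hintmap _ hsm_xf).mpr hint2
  have hif' : Integrable (fun x => deriv f x) (gaussianReal 0 v) :=
    (hintmap _ hsm_f').mpr hint3
  have hstein := stein_gauss hvne f hf hixf hif' (by rw [hvR]; exact htop) (by rw [hvR]; exact hbot)
  have hSteinZ : ∫ ω, Z ω * f (Z ω) ∂ℙ = σz ^ 2 * ∫ ω, deriv f (Z ω) ∂ℙ := by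
    rw [hmap _ hsm_xf, hmap _ hsm_f', hstein, hvR]
  have hEZ2Ω : ∫ ω, Z ω * Z ω ∂ℙ = σz ^ 2 := by
    rw [hmap (fun x => x * x) (measurable_id.mul measurable_id).aestronglyMeasurable, hEZ2]
  -- independence facts
  have hindepf : IndepFun (fun ω => f (Z ω)) N ℙ := hindep.comp hfm measurable_id
  have hfZNint : Integrable (fun ω => f (Z ω) * N ω) ℙ := by
    have := hindepf.integrable_mul hint1 hNint
    exact this
  have hZNint : Integrable (fun ω => Z ω * N ω) ℙ := by
    have := hindep.integrable_mul hZint hNint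
    exact this
  have hEfZN : ∫ ω, f (Z ω) * N ω ∂ℙ = 0 := by
    have h := hindepf.integral_mul_eq_mul_integral (hfm.comp hZ).aestronglyMeasurable hN.aestronglyMeasurable
    have h' : ∫ ω, f (Z ω) * N ω ∂ℙ = (∫ ω, f (Z ω) ∂ℙ) * ∫ ω, N ω ∂ℙ := h
    rw [h', hNmean, mul_zero]
  have hEZN : ∫ ω, Z ω * N ω ∂ℙ = 0 := by
    have h := hindep.integral_mul_eq_mul_integral hZ.aestronglyMeasurable hN.aestronglyMeasurable
    have h' : ∫ ω, Z ω * N ω ∂ℙ = (∫ ω, Z ω ∂ℙ) * ∫ ω, N ω ∂ℙ := h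
    rw [h', hNmean, mul_zero]
  -- split both sides
  have hL : ∫ ω, f (Z ω) * (a * Z ω + N ω) ∂ℙ
      = a * ∫ ω, Z ω * f (Z ω) ∂ℙ + ∫ ω, f (Z ω) * N ω ∂ℙ := by
    have heq : (fun ω => f (Z ω) * (a * Z ω + N ω))
        = fun ω => a * (Z ω * f (Z ω)) + f (Z ω) * N ω := by
      funext ω
      ring
    rw [heq, integral_add (hint2.const_mul a) hfZNint, integral_const_mul]
  have hR : ∫ ω, Z ω * (a * Z ω + N ω) ∂ℙ
      = a * ∫ ω, Z ω * Z ω ∂ℙ + ∫ ω, Z ω * N ω ∂ℙ := by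
    have heq : (fun ω => Z ω * (a * Z ω + N ω))
        = fun ω => a * (Z ω * Z ω) + Z ω * N ω := by
      funext ω
      ring
    rw [heq, integral_add (hZZint.const_mul a) hZNint, integral_const_mul]
  rw [hL, hR, hEfZN, hEZN, hSteinZ, hEZ2Ω]
  ring

end Main
end

section
/- Let a > 0, let U and U' be independent random variables uniformly distributed on the interval [−a, a], let V be an independent Gaussian random variable with mean 0 and variance σ_v², and write σ_u² = a²/3 for the variance of U. Fix θ ∈ ℝ and set Y = (θU + U' + V)³. Then E[Y·U] = σ_u²·((9/5)σ_u²θ³ + 3(σ_u² + σ_v²)θ) and E[Y·U'] = σ_u²·(3σ_u²θ² + (9/5)σ_u² + 3σ_v²). -/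
set_option maxHeartbeats 4000000
open MeasureTheory ProbabilityTheory Real Set Filter
open scoped NNReal ENNReal

-- uniform moments
lemma unif_moment (a : ℝ) (ha : 0 < a) (n : ℕ) :
    ∫ x, x ^ n ∂((volume (Set.Icc (-a) a))⁻¹ • volume.restrict (Set.Icc (-a) a)) =
      (a ^ (n+1) - (-a) ^ (n+1)) / (n+1) / (2*a) := by
  rw [integral_smul_measure, Real.volume_Icc, MeasureTheory.integral_Icc_eq_integral_Ioc,
    ← intervalIntegral.integral_of_le (by linarith : -a ≤ a), integral_pow,
    ENNReal.toReal_inv, ENNReal.toReal_ofReal (by linarith), smul_eq_mul,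
    show a - -a = 2*a by ring]
  ring

lemma unif_integrable_pow (a : ℝ) (ha : 0 < a) (n : ℕ) :
    Integrable (fun x : ℝ => x ^ n)
      ((volume (Set.Icc (-a) a))⁻¹ • volume.restrict (Set.Icc (-a) a)) := by
  have h : IntegrableOn (fun x : ℝ => x ^ n) (Set.Icc (-a) a) :=
    (continuous_pow n).integrableOn_Icc
  refine h.smul_measure ?_
  rw [Real.volume_Icc]
  exact ENNReal.inv_ne_top.mpr (by simp [ENNReal.ofReal_eq_zero]; linarith)
open MeasureTheory ProbabilityTheory Real Set Filter

lemma integral_odd_fun (f : ℝ → ℝ) (hf : ∀ x, f (-x) = - f x) : ∫ x, f x = 0 := by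
  have h : ∫ x, f (-x) = ∫ x, f x := integral_neg_eq_self f volume
  have h2 : ∫ x, f (-x) = - ∫ x, f x := by
    simp only [hf]
    exact integral_neg f
  linarith [h, h2]

lemma int_pow_gauss {b : ℝ} (hb : 0 < b) (n : ℕ) :
    Integrable (fun x : ℝ => x ^ n * Real.exp (-b * x ^ 2)) := by
  have h := integrable_rpow_mul_exp_neg_mul_sq hb
    (s := (n : ℝ)) (lt_of_lt_of_le neg_one_lt_zero (Nat.cast_nonneg n))
  simpa [Real.rpow_natCast] using h

lemma tendsto_mul_exp_neg_mul_sq {b : ℝ} (hb : 0 < b) :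
    Tendsto (fun x : ℝ => x * Real.exp (-b * x ^ 2)) atTop (nhds 0) := by
  have h := rpow_mul_exp_neg_mul_sq_isLittleO_exp_neg hb 1
  simp only [Real.rpow_one] at h
  have hexp : Tendsto (fun x : ℝ => Real.exp (-(1/2) * x)) atTop (nhds 0) :=
    Real.tendsto_exp_atBot.comp (tendsto_id.const_mul_atTop_of_neg (by norm_num))
  exact h.isBigO.trans_tendsto hexp

lemma integral_sq_mul_exp_neg_mul_sq {b : ℝ} (hb : 0 < b) :
    ∫ x : ℝ, x ^ 2 * Real.exp (-b * x ^ 2) = (2*b)⁻¹ * Real.sqrt (π / b) := by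
  have hb' : b ≠ 0 := hb.ne'
  -- derivative computation
  have hd : ∀ x ∈ Ici (0:ℝ), HasDerivAt (fun x : ℝ => -(2*b)⁻¹ * (x * Real.exp (-b * x ^ 2)))
      (x ^ 2 * Real.exp (-b * x ^ 2) - (2*b)⁻¹ * Real.exp (-b * x ^ 2)) x := by
    intro x _
    have h1 : HasDerivAt (fun y : ℝ => -b * y ^ 2) (-b * (2 * x ^ 1)) x :=
      (hasDerivAt_pow 2 x).const_mul (-b)
    have h2 := ((hasDerivAt_id x).mul h1.exp).const_mul (-(2*b)⁻¹)
    refine h2.congr_deriv ?_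
    simp only [id]
    field_simp
    ring
  have hint2 := int_pow_gauss hb 2
  have hintexp := integrable_exp_neg_mul_sq hb
  have hiOn : IntegrableOn
      (fun x : ℝ => x ^ 2 * Real.exp (-b * x ^ 2) - (2*b)⁻¹ * Real.exp (-b * x ^ 2)) (Ioi 0) :=
    (hint2.sub (hintexp.const_mul _)).integrableOn
  have hten : Tendsto (fun x : ℝ => -(2*b)⁻¹ * (x * Real.exp (-b * x ^ 2))) atTop (nhds 0) := by
    have := (tendsto_mul_exp_neg_mul_sq hb).const_mul (-(2*b)⁻¹)
    simpa using this
  have key := integral_Ioi_of_hasDerivAt_of_tendsto' hd hiOn hten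
  simp only [mul_zero, Real.exp_zero, mul_one, zero_mul, mul_zero, neg_zero, sub_zero,
    zero_sub] at key
  -- key : ∫ x in Ioi 0, (x^2 * exp - (2b)⁻¹ exp) = -(-(2*b)⁻¹ * (0 * exp (-b * 0^2)))
  rw [integral_sub hint2.integrableOn (hintexp.const_mul _).integrableOn] at key
  rw [integral_const_mul, integral_gaussian_Ioi] at key
  have hIoi : ∫ x in Ioi (0:ℝ), x ^ 2 * Real.exp (-b * x ^ 2)
      = (2*b)⁻¹ * (Real.sqrt (π / b) / 2) := by linarith [key]
  -- even function: whole line = 2 * Ioi part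
  have hsplit : ∫ x : ℝ, x ^ 2 * Real.exp (-b * x ^ 2)
      = (∫ x in Iic (0:ℝ), x ^ 2 * Real.exp (-b * x ^ 2))
        + ∫ x in Ioi (0:ℝ), x ^ 2 * Real.exp (-b * x ^ 2) := by
    rw [← integral_add_compl measurableSet_Iic hint2, compl_Iic]
  have hneg : ∫ x in Iic (0:ℝ), x ^ 2 * Real.exp (-b * x ^ 2)
      = ∫ x in Ioi (0:ℝ), x ^ 2 * Real.exp (-b * x ^ 2) := by
    rw [show (0:ℝ) = -0 by norm_num, ← integral_comp_neg_Ioi]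
    simp
  rw [hsplit, hneg, hIoi]
  ring

lemma gauss_pdf_eq (v : ℝ≥0) (hv : v ≠ 0) : gaussianPDFReal 0 v
    = fun x => (Real.sqrt (2*π*v))⁻¹ * Real.exp (-(2*(v:ℝ))⁻¹ * x ^ 2) := by
  have hv' : (0:ℝ) < v := (by exact_mod_cast pos_iff_ne_zero.mpr hv : (0:ℝ) < v)
  funext x
  unfold gaussianPDFReal
  congr 1
  rw [sub_zero]
  field_simp

lemma gauss_int_eq (v : ℝ≥0) (hv : v ≠ 0) (g : ℝ → ℝ) :
    ∫ x, g x ∂gaussianReal 0 v = ∫ x, gaussianPDFReal 0 v x * g x := by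
  rw [gaussianReal_of_var_ne_zero _ hv]
  have h : gaussianPDF 0 v = fun x => ((gaussianPDFReal 0 v x).toNNReal : ℝ≥0∞) := rfl
  rw [h, integral_withDensity_eq_integral_smul
    (measurable_gaussianPDFReal 0 v).real_toNNReal g]
  congr 1
  funext x
  rw [NNReal.smul_def, Real.coe_toNNReal _ (gaussianPDFReal_nonneg _ _ _), smul_eq_mul]

lemma gauss_integrable_pow (v : ℝ≥0) (n : ℕ) :
    Integrable (fun x : ℝ => x ^ n) (gaussianReal 0 v) := by
  by_cases hv : v = 0
  · simp only [hv, gaussianReal_zero_var]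
    refine ⟨(measurable_id.pow_const n).aestronglyMeasurable, ?_⟩
    rw [HasFiniteIntegral, lintegral_dirac]
    exact ENNReal.coe_lt_top
  · have hv' : (0:ℝ) < v := (by exact_mod_cast pos_iff_ne_zero.mpr hv : (0:ℝ) < v)
    have hb : (0:ℝ) < (2*(v:ℝ))⁻¹ := by positivity
    rw [gaussianReal_of_var_ne_zero _ hv]
    rw [integrable_withDensity_iff (measurable_gaussianPDF 0 v)
      (Filter.Eventually.of_forall fun x => ENNReal.ofReal_lt_top)]
    have h : (fun x : ℝ => x ^ n * (gaussianPDF 0 v x).toReal)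
        = fun x => (Real.sqrt (2*π*v))⁻¹ * (x ^ n * Real.exp (-(2*(v:ℝ))⁻¹ * x ^ 2)) := by
      funext x
      rw [gaussianPDF, ENNReal.toReal_ofReal (gaussianPDFReal_nonneg _ _ _), gauss_pdf_eq v hv]
      ring
    rw [h]
    exact (int_pow_gauss hb n).const_mul _

lemma gauss_moment_odd (v : ℝ≥0) (n : ℕ) (hn : Odd n) :
    ∫ x, x ^ n ∂gaussianReal 0 v = 0 := by
  by_cases hv : v = 0
  · simp [hv, hn.pos.ne']
  · rw [gauss_int_eq v hv]
    apply integral_odd_fun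
    intro x
    rw [gauss_pdf_eq v hv]
    simp only [neg_sq, hn.neg_pow]
    ring

lemma gauss_moment_sq (v : ℝ≥0) :
    ∫ x, x ^ 2 ∂gaussianReal 0 v = v := by
  by_cases hv : v = 0
  · simp [hv]
  · have hv' : (0:ℝ) < v := (by exact_mod_cast pos_iff_ne_zero.mpr hv : (0:ℝ) < v)
    have hb : (0:ℝ) < (2*(v:ℝ))⁻¹ := by positivity
    rw [gauss_int_eq v hv, gauss_pdf_eq v hv]
    have h : (fun x : ℝ => (Real.sqrt (2*π*v))⁻¹ * Real.exp (-(2*(v:ℝ))⁻¹ * x ^ 2) * x ^ 2)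
        = fun x => (Real.sqrt (2*π*v))⁻¹ * (x ^ 2 * Real.exp (-(2*(v:ℝ))⁻¹ * x ^ 2)) := by
      funext x; ring
    rw [h, integral_const_mul, integral_sq_mul_exp_neg_mul_sq hb]
    rw [show π / (2*(v:ℝ))⁻¹ = 2*π*v by field_simp]
    rw [show ((2:ℝ)*(2*(v:ℝ))⁻¹)⁻¹ = v by field_simp]
    have hs : Real.sqrt (2*π*v) ≠ 0 := by positivity
    field_simp
/-- Cross-correlations of the cubic stochastic Wiener system with uniform input on
`[-a, a]` (so the input variance is `σ_u² = a²/3`): for `Y = (θU + U' + V)³`,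
`E[Y·U] = σ_u²((9/5)σ_u²θ³ + 3(σ_u² + σ_v²)θ)` and
`E[Y·U'] = σ_u²(3σ_u²θ² + (9/5)σ_u² + 3σ_v²)`. -/
theorem bla_cross_correlations_uniform_input
    {Ω : Type*} [MeasureSpace Ω] [IsProbabilityMeasure (ℙ : Measure Ω)]
    (a : ℝ) (ha : 0 < a) (σv : ℝ)
    (U U' V : Ω → ℝ)
    (hU : Measurable U) (hU' : Measurable U') (hV : Measurable V)
    (hindep : iIndepFun ![U, U', V] ℙ)
    (hUlaw : Measure.map U ℙ =
      (volume (Set.Icc (-a) a))⁻¹ • volume.restrict (Set.Icc (-a) a))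
    (hU'law : Measure.map U' ℙ =
      (volume (Set.Icc (-a) a))⁻¹ • volume.restrict (Set.Icc (-a) a))
    (hVlaw : Measure.map V ℙ = gaussianReal 0 ⟨σv ^ 2, sq_nonneg σv⟩)
    (σu2 : ℝ) (hσu2 : σu2 = a ^ 2 / 3)
    (θ : ℝ) (Y : Ω → ℝ) (hY : Y = fun ω => (θ * U ω + U' ω + V ω) ^ 3) :
    (∫ ω, Y ω * U ω ∂ℙ = σu2 * ((9 / 5) * σu2 * θ ^ 3 + 3 * (σu2 + σv ^ 2) * θ)) ∧
    (∫ ω, Y ω * U' ω ∂ℙ = σu2 * (3 * σu2 * θ ^ 2 + (9 / 5) * σu2 + 3 * σv ^ 2)) := by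
  have ha' : a ≠ 0 := ha.ne'
  have intU : ∀ n : ℕ, Integrable (fun ω => U ω ^ n) ℙ := by
    intro n
    have h := unif_integrable_pow a ha n
    rw [← hUlaw] at h
    exact (integrable_map_measure (measurable_id.pow_const n).aestronglyMeasurable
      hU.aemeasurable).mp h
  have intU' : ∀ n : ℕ, Integrable (fun ω => U' ω ^ n) ℙ := by
    intro n
    have h := unif_integrable_pow a ha n
    rw [← hU'law] at h
    exact (integrable_map_measure (measurable_id.pow_const n).aestronglyMeasurable
      hU'.aemeasurable).mp h
  have intV : ∀ n : ℕ, Integrable (fun ω => V ω ^ n) ℙ := by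
    intro n
    have h := gauss_integrable_pow ⟨σv ^ 2, sq_nonneg σv⟩ n
    rw [← hVlaw] at h
    exact (integrable_map_measure (measurable_id.pow_const n).aestronglyMeasurable
      hV.aemeasurable).mp h
  have EUeq : ∀ n : ℕ, ∫ ω, U ω ^ n ∂ℙ = (a ^ (n+1) - (-a) ^ (n+1)) / (n+1) / (2*a) := by
    intro n
    have h := integral_map (μ := ℙ) hU.aemeasurable (f := fun x => x ^ n)
      ((measurable_id.pow_const n).aestronglyMeasurable)
    rw [← unif_moment a ha n, ← hUlaw, h]
  have EU'eq : ∀ n : ℕ, ∫ ω, U' ω ^ n ∂ℙ = (a ^ (n+1) - (-a) ^ (n+1)) / (n+1) / (2*a) := by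
    intro n
    have h := integral_map (μ := ℙ) hU'.aemeasurable (f := fun x => x ^ n)
      ((measurable_id.pow_const n).aestronglyMeasurable)
    rw [← unif_moment a ha n, ← hU'law, h]
  have EVeq : ∀ n : ℕ, ∫ ω, V ω ^ n ∂ℙ = ∫ x, x ^ n ∂gaussianReal 0 ⟨σv ^ 2, sq_nonneg σv⟩ := by
    intro n
    have h := integral_map (μ := ℙ) hV.aemeasurable (f := fun x => x ^ n)
      ((measurable_id.pow_const n).aestronglyMeasurable)
    rw [← hVlaw, h]
  have EU0 : ∫ ω, U ω ^ 0 ∂ℙ = 1 := by simp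
  have EU1 : ∫ ω, U ω ^ 1 ∂ℙ = 0 := by
    rw [EUeq, show a ^ (1+1) - (-a) ^ (1+1) = 0 by ring]; norm_num
  have EU2 : ∫ ω, U ω ^ 2 ∂ℙ = a ^ 2 / 3 := by rw [EUeq]; field_simp; ring
  have EU3 : ∫ ω, U ω ^ 3 ∂ℙ = 0 := by
    rw [EUeq, show a ^ (3+1) - (-a) ^ (3+1) = 0 by ring]; norm_num
  have EU4 : ∫ ω, U ω ^ 4 ∂ℙ = a ^ 4 / 5 := by rw [EUeq]; field_simp; ring
  have EU'0 : ∫ ω, U' ω ^ 0 ∂ℙ = 1 := by simp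
  have EU'1 : ∫ ω, U' ω ^ 1 ∂ℙ = 0 := by
    rw [EU'eq, show a ^ (1+1) - (-a) ^ (1+1) = 0 by ring]; norm_num
  have EU'2 : ∫ ω, U' ω ^ 2 ∂ℙ = a ^ 2 / 3 := by rw [EU'eq]; field_simp; ring
  have EU'3 : ∫ ω, U' ω ^ 3 ∂ℙ = 0 := by
    rw [EU'eq, show a ^ (3+1) - (-a) ^ (3+1) = 0 by ring]; norm_num
  have EU'4 : ∫ ω, U' ω ^ 4 ∂ℙ = a ^ 4 / 5 := by rw [EU'eq]; field_simp; ring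
  have EV0 : ∫ ω, V ω ^ 0 ∂ℙ = 1 := by simp
  have EV1 : ∫ ω, V ω ^ 1 ∂ℙ = 0 := by
    rw [EVeq]; exact gauss_moment_odd _ 1 (by decide)
  have EV2 : ∫ ω, V ω ^ 2 ∂ℙ = σv ^ 2 := by
    rw [EVeq]; exact gauss_moment_sq ⟨σv ^ 2, sq_nonneg σv⟩
  have EV3 : ∫ ω, V ω ^ 3 ∂ℙ = 0 := by
    rw [EVeq]; exact gauss_moment_odd _ 3 (by decide)
  have fact : ∀ i j k : ℕ,
      Integrable (fun ω => U ω ^ i * U' ω ^ j * V ω ^ k) ℙ ∧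
      ∫ ω, U ω ^ i * U' ω ^ j * V ω ^ k ∂ℙ
        = (∫ ω, U ω ^ i ∂ℙ) * (∫ ω, U' ω ^ j ∂ℙ) * (∫ ω, V ω ^ k ∂ℙ) := by
    intro i j k
    have hcomp : iIndepFun
        ![fun ω => U ω ^ i, fun ω => U' ω ^ j, fun ω => V ω ^ k] ℙ := by
      have h := hindep.comp ![fun x => x ^ i, fun x => x ^ j, fun x => x ^ k]
        (fun l => by fin_cases l <;> exact measurable_id.pow_const _)
      convert h using 1
      funext l
      fin_cases l <;> rfl
    have hmeas : ∀ l, Measurable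
        (![fun ω => U ω ^ i, fun ω => U' ω ^ j, fun ω => V ω ^ k] l) := by
      intro l
      fin_cases l
      · exact hU.pow_const i
      · exact hU'.pow_const j
      · exact hV.pow_const k
    have h12 : IndepFun (fun ω => U ω ^ i) (fun ω => U' ω ^ j) ℙ :=
      hcomp.indepFun (show (0 : Fin 3) ≠ 1 by decide)
    have h3 : IndepFun (fun ω => U ω ^ i * U' ω ^ j) (fun ω => V ω ^ k) ℙ :=
      hcomp.indepFun_mul_left hmeas 0 1 2 (by decide) (by decide)
    have hP : Integrable (fun ω => U ω ^ i * U' ω ^ j) ℙ :=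
      h12.integrable_mul (intU i) (intU' j)
    have e1 : ∫ ω, U ω ^ i * U' ω ^ j * V ω ^ k ∂ℙ
        = (∫ ω, U ω ^ i * U' ω ^ j ∂ℙ) * ∫ ω, V ω ^ k ∂ℙ :=
      h3.integral_mul_eq_mul_integral hP.aestronglyMeasurable (intV k).aestronglyMeasurable
    have e2 : ∫ ω, U ω ^ i * U' ω ^ j ∂ℙ = (∫ ω, U ω ^ i ∂ℙ) * ∫ ω, U' ω ^ j ∂ℙ :=
      h12.integral_mul_eq_mul_integral (intU i).aestronglyMeasurable (intU' j).aestronglyMeasurable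
    exact ⟨h3.integrable_mul hP (intV k), by rw [e1, e2]⟩
  have I : ∀ (c : ℝ) (i j k : ℕ),
      Integrable (fun ω => c * (U ω ^ i * U' ω ^ j * V ω ^ k)) ℙ :=
    fun c i j k => ((fact i j k).1).const_mul c
  constructor
  · have hre : (fun ω => Y ω * U ω) = fun ω =>
        θ^3 * (U ω ^ 4 * U' ω ^ 0 * V ω ^ 0) + (1 * (U ω ^ 1 * U' ω ^ 3 * V ω ^ 0) + (1 * (U ω ^ 1 * U' ω ^ 0 * V ω ^ 3) + (3*θ^2 * (U ω ^ 3 * U' ω ^ 1 * V ω ^ 0) + (3*θ^2 * (U ω ^ 3 * U' ω ^ 0 * V ω ^ 1) + (3*θ * (U ω ^ 2 * U' ω ^ 2 * V ω ^ 0) + (3 * (U ω ^ 1 * U' ω ^ 2 * V ω ^ 1) + (3*θ * (U ω ^ 2 * U' ω ^ 0 * V ω ^ 2) + (3 * (U ω ^ 1 * U' ω ^ 1 * V ω ^ 2) + (6*θ * (U ω ^ 2 * U' ω ^ 1 * V ω ^ 1)))))))))) := by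
      funext ω; rw [hY]; ring
    have S9 : Integrable (fun ω => 6*θ * (U ω ^ 2 * U' ω ^ 1 * V ω ^ 1)) ℙ := by
      exact I (6*θ) 2 1 1
    have S8 : Integrable (fun ω => 3 * (U ω ^ 1 * U' ω ^ 1 * V ω ^ 2) + (6*θ * (U ω ^ 2 * U' ω ^ 1 * V ω ^ 1))) ℙ := by
      exact (I (3) 1 1 2).add S9
    have S7 : Integrable (fun ω => 3*θ * (U ω ^ 2 * U' ω ^ 0 * V ω ^ 2) + (3 * (U ω ^ 1 * U' ω ^ 1 * V ω ^ 2) + (6*θ * (U ω ^ 2 * U' ω ^ 1 * V ω ^ 1)))) ℙ := by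
      exact (I (3*θ) 2 0 2).add S8
    have S6 : Integrable (fun ω => 3 * (U ω ^ 1 * U' ω ^ 2 * V ω ^ 1) + (3*θ * (U ω ^ 2 * U' ω ^ 0 * V ω ^ 2) + (3 * (U ω ^ 1 * U' ω ^ 1 * V ω ^ 2) + (6*θ * (U ω ^ 2 * U' ω ^ 1 * V ω ^ 1))))) ℙ := by
      exact (I (3) 1 2 1).add S7
    have S5 : Integrable (fun ω => 3*θ * (U ω ^ 2 * U' ω ^ 2 * V ω ^ 0) + (3 * (U ω ^ 1 * U' ω ^ 2 * V ω ^ 1) + (3*θ * (U ω ^ 2 * U' ω ^ 0 * V ω ^ 2) + (3 * (U ω ^ 1 * U' ω ^ 1 * V ω ^ 2) + (6*θ * (U ω ^ 2 * U' ω ^ 1 * V ω ^ 1)))))) ℙ := by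
      exact (I (3*θ) 2 2 0).add S6
    have S4 : Integrable (fun ω => 3*θ^2 * (U ω ^ 3 * U' ω ^ 0 * V ω ^ 1) + (3*θ * (U ω ^ 2 * U' ω ^ 2 * V ω ^ 0) + (3 * (U ω ^ 1 * U' ω ^ 2 * V ω ^ 1) + (3*θ * (U ω ^ 2 * U' ω ^ 0 * V ω ^ 2) + (3 * (U ω ^ 1 * U' ω ^ 1 * V ω ^ 2) + (6*θ * (U ω ^ 2 * U' ω ^ 1 * V ω ^ 1))))))) ℙ := by
      exact (I (3*θ^2) 3 0 1).add S5
    have S3 : Integrable (fun ω => 3*θ^2 * (U ω ^ 3 * U' ω ^ 1 * V ω ^ 0) + (3*θ^2 * (U ω ^ 3 * U' ω ^ 0 * V ω ^ 1) + (3*θ * (U ω ^ 2 * U' ω ^ 2 * V ω ^ 0) + (3 * (U ω ^ 1 * U' ω ^ 2 * V ω ^ 1) + (3*θ * (U ω ^ 2 * U' ω ^ 0 * V ω ^ 2) + (3 * (U ω ^ 1 * U' ω ^ 1 * V ω ^ 2) + (6*θ * (U ω ^ 2 * U' ω ^ 1 * V ω ^ 1)))))))) ℙ := by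
      exact (I (3*θ^2) 3 1 0).add S4
    have S2 : Integrable (fun ω => 1 * (U ω ^ 1 * U' ω ^ 0 * V ω ^ 3) + (3*θ^2 * (U ω ^ 3 * U' ω ^ 1 * V ω ^ 0) + (3*θ^2 * (U ω ^ 3 * U' ω ^ 0 * V ω ^ 1) + (3*θ * (U ω ^ 2 * U' ω ^ 2 * V ω ^ 0) + (3 * (U ω ^ 1 * U' ω ^ 2 * V ω ^ 1) + (3*θ * (U ω ^ 2 * U' ω ^ 0 * V ω ^ 2) + (3 * (U ω ^ 1 * U' ω ^ 1 * V ω ^ 2) + (6*θ * (U ω ^ 2 * U' ω ^ 1 * V ω ^ 1))))))))) ℙ := by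
      exact (I (1) 1 0 3).add S3
    have S1 : Integrable (fun ω => 1 * (U ω ^ 1 * U' ω ^ 3 * V ω ^ 0) + (1 * (U ω ^ 1 * U' ω ^ 0 * V ω ^ 3) + (3*θ^2 * (U ω ^ 3 * U' ω ^ 1 * V ω ^ 0) + (3*θ^2 * (U ω ^ 3 * U' ω ^ 0 * V ω ^ 1) + (3*θ * (U ω ^ 2 * U' ω ^ 2 * V ω ^ 0) + (3 * (U ω ^ 1 * U' ω ^ 2 * V ω ^ 1) + (3*θ * (U ω ^ 2 * U' ω ^ 0 * V ω ^ 2) + (3 * (U ω ^ 1 * U' ω ^ 1 * V ω ^ 2) + (6*θ * (U ω ^ 2 * U' ω ^ 1 * V ω ^ 1)))))))))) ℙ := by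
      exact (I (1) 1 3 0).add S2
    have ES0 : ∫ ω, (θ^3 * (U ω ^ 4 * U' ω ^ 0 * V ω ^ 0) + (1 * (U ω ^ 1 * U' ω ^ 3 * V ω ^ 0) + (1 * (U ω ^ 1 * U' ω ^ 0 * V ω ^ 3) + (3*θ^2 * (U ω ^ 3 * U' ω ^ 1 * V ω ^ 0) + (3*θ^2 * (U ω ^ 3 * U' ω ^ 0 * V ω ^ 1) + (3*θ * (U ω ^ 2 * U' ω ^ 2 * V ω ^ 0) + (3 * (U ω ^ 1 * U' ω ^ 2 * V ω ^ 1) + (3*θ * (U ω ^ 2 * U' ω ^ 0 * V ω ^ 2) + (3 * (U ω ^ 1 * U' ω ^ 1 * V ω ^ 2) + (6*θ * (U ω ^ 2 * U' ω ^ 1 * V ω ^ 1))))))))))) ∂ℙ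
        = (∫ ω, θ^3 * (U ω ^ 4 * U' ω ^ 0 * V ω ^ 0) ∂ℙ) + ∫ ω, 1 * (U ω ^ 1 * U' ω ^ 3 * V ω ^ 0) + (1 * (U ω ^ 1 * U' ω ^ 0 * V ω ^ 3) + (3*θ^2 * (U ω ^ 3 * U' ω ^ 1 * V ω ^ 0) + (3*θ^2 * (U ω ^ 3 * U' ω ^ 0 * V ω ^ 1) + (3*θ * (U ω ^ 2 * U' ω ^ 2 * V ω ^ 0) + (3 * (U ω ^ 1 * U' ω ^ 2 * V ω ^ 1) + (3*θ * (U ω ^ 2 * U' ω ^ 0 * V ω ^ 2) + (3 * (U ω ^ 1 * U' ω ^ 1 * V ω ^ 2) + (6*θ * (U ω ^ 2 * U' ω ^ 1 * V ω ^ 1))))))))) ∂ℙ :=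
      integral_add (I (θ^3) 4 0 0) S1
    have ES1 : ∫ ω, (1 * (U ω ^ 1 * U' ω ^ 3 * V ω ^ 0) + (1 * (U ω ^ 1 * U' ω ^ 0 * V ω ^ 3) + (3*θ^2 * (U ω ^ 3 * U' ω ^ 1 * V ω ^ 0) + (3*θ^2 * (U ω ^ 3 * U' ω ^ 0 * V ω ^ 1) + (3*θ * (U ω ^ 2 * U' ω ^ 2 * V ω ^ 0) + (3 * (U ω ^ 1 * U' ω ^ 2 * V ω ^ 1) + (3*θ * (U ω ^ 2 * U' ω ^ 0 * V ω ^ 2) + (3 * (U ω ^ 1 * U' ω ^ 1 * V ω ^ 2) + (6*θ * (U ω ^ 2 * U' ω ^ 1 * V ω ^ 1)))))))))) ∂ℙ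
        = (∫ ω, 1 * (U ω ^ 1 * U' ω ^ 3 * V ω ^ 0) ∂ℙ) + ∫ ω, 1 * (U ω ^ 1 * U' ω ^ 0 * V ω ^ 3) + (3*θ^2 * (U ω ^ 3 * U' ω ^ 1 * V ω ^ 0) + (3*θ^2 * (U ω ^ 3 * U' ω ^ 0 * V ω ^ 1) + (3*θ * (U ω ^ 2 * U' ω ^ 2 * V ω ^ 0) + (3 * (U ω ^ 1 * U' ω ^ 2 * V ω ^ 1) + (3*θ * (U ω ^ 2 * U' ω ^ 0 * V ω ^ 2) + (3 * (U ω ^ 1 * U' ω ^ 1 * V ω ^ 2) + (6*θ * (U ω ^ 2 * U' ω ^ 1 * V ω ^ 1)))))))) ∂ℙ :=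
      integral_add (I (1) 1 3 0) S2
    have ES2 : ∫ ω, (1 * (U ω ^ 1 * U' ω ^ 0 * V ω ^ 3) + (3*θ^2 * (U ω ^ 3 * U' ω ^ 1 * V ω ^ 0) + (3*θ^2 * (U ω ^ 3 * U' ω ^ 0 * V ω ^ 1) + (3*θ * (U ω ^ 2 * U' ω ^ 2 * V ω ^ 0) + (3 * (U ω ^ 1 * U' ω ^ 2 * V ω ^ 1) + (3*θ * (U ω ^ 2 * U' ω ^ 0 * V ω ^ 2) + (3 * (U ω ^ 1 * U' ω ^ 1 * V ω ^ 2) + (6*θ * (U ω ^ 2 * U' ω ^ 1 * V ω ^ 1))))))))) ∂ℙ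
        = (∫ ω, 1 * (U ω ^ 1 * U' ω ^ 0 * V ω ^ 3) ∂ℙ) + ∫ ω, 3*θ^2 * (U ω ^ 3 * U' ω ^ 1 * V ω ^ 0) + (3*θ^2 * (U ω ^ 3 * U' ω ^ 0 * V ω ^ 1) + (3*θ * (U ω ^ 2 * U' ω ^ 2 * V ω ^ 0) + (3 * (U ω ^ 1 * U' ω ^ 2 * V ω ^ 1) + (3*θ * (U ω ^ 2 * U' ω ^ 0 * V ω ^ 2) + (3 * (U ω ^ 1 * U' ω ^ 1 * V ω ^ 2) + (6*θ * (U ω ^ 2 * U' ω ^ 1 * V ω ^ 1))))))) ∂ℙ :=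
      integral_add (I (1) 1 0 3) S3
    have ES3 : ∫ ω, (3*θ^2 * (U ω ^ 3 * U' ω ^ 1 * V ω ^ 0) + (3*θ^2 * (U ω ^ 3 * U' ω ^ 0 * V ω ^ 1) + (3*θ * (U ω ^ 2 * U' ω ^ 2 * V ω ^ 0) + (3 * (U ω ^ 1 * U' ω ^ 2 * V ω ^ 1) + (3*θ * (U ω ^ 2 * U' ω ^ 0 * V ω ^ 2) + (3 * (U ω ^ 1 * U' ω ^ 1 * V ω ^ 2) + (6*θ * (U ω ^ 2 * U' ω ^ 1 * V ω ^ 1)))))))) ∂ℙ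
        = (∫ ω, 3*θ^2 * (U ω ^ 3 * U' ω ^ 1 * V ω ^ 0) ∂ℙ) + ∫ ω, 3*θ^2 * (U ω ^ 3 * U' ω ^ 0 * V ω ^ 1) + (3*θ * (U ω ^ 2 * U' ω ^ 2 * V ω ^ 0) + (3 * (U ω ^ 1 * U' ω ^ 2 * V ω ^ 1) + (3*θ * (U ω ^ 2 * U' ω ^ 0 * V ω ^ 2) + (3 * (U ω ^ 1 * U' ω ^ 1 * V ω ^ 2) + (6*θ * (U ω ^ 2 * U' ω ^ 1 * V ω ^ 1)))))) ∂ℙ :=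
      integral_add (I (3*θ^2) 3 1 0) S4
    have ES4 : ∫ ω, (3*θ^2 * (U ω ^ 3 * U' ω ^ 0 * V ω ^ 1) + (3*θ * (U ω ^ 2 * U' ω ^ 2 * V ω ^ 0) + (3 * (U ω ^ 1 * U' ω ^ 2 * V ω ^ 1) + (3*θ * (U ω ^ 2 * U' ω ^ 0 * V ω ^ 2) + (3 * (U ω ^ 1 * U' ω ^ 1 * V ω ^ 2) + (6*θ * (U ω ^ 2 * U' ω ^ 1 * V ω ^ 1))))))) ∂ℙ
        = (∫ ω, 3*θ^2 * (U ω ^ 3 * U' ω ^ 0 * V ω ^ 1) ∂ℙ) + ∫ ω, 3*θ * (U ω ^ 2 * U' ω ^ 2 * V ω ^ 0) + (3 * (U ω ^ 1 * U' ω ^ 2 * V ω ^ 1) + (3*θ * (U ω ^ 2 * U' ω ^ 0 * V ω ^ 2) + (3 * (U ω ^ 1 * U' ω ^ 1 * V ω ^ 2) + (6*θ * (U ω ^ 2 * U' ω ^ 1 * V ω ^ 1))))) ∂ℙ :=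
      integral_add (I (3*θ^2) 3 0 1) S5
    have ES5 : ∫ ω, (3*θ * (U ω ^ 2 * U' ω ^ 2 * V ω ^ 0) + (3 * (U ω ^ 1 * U' ω ^ 2 * V ω ^ 1) + (3*θ * (U ω ^ 2 * U' ω ^ 0 * V ω ^ 2) + (3 * (U ω ^ 1 * U' ω ^ 1 * V ω ^ 2) + (6*θ * (U ω ^ 2 * U' ω ^ 1 * V ω ^ 1)))))) ∂ℙ
        = (∫ ω, 3*θ * (U ω ^ 2 * U' ω ^ 2 * V ω ^ 0) ∂ℙ) + ∫ ω, 3 * (U ω ^ 1 * U' ω ^ 2 * V ω ^ 1) + (3*θ * (U ω ^ 2 * U' ω ^ 0 * V ω ^ 2) + (3 * (U ω ^ 1 * U' ω ^ 1 * V ω ^ 2) + (6*θ * (U ω ^ 2 * U' ω ^ 1 * V ω ^ 1)))) ∂ℙ :=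
      integral_add (I (3*θ) 2 2 0) S6
    have ES6 : ∫ ω, (3 * (U ω ^ 1 * U' ω ^ 2 * V ω ^ 1) + (3*θ * (U ω ^ 2 * U' ω ^ 0 * V ω ^ 2) + (3 * (U ω ^ 1 * U' ω ^ 1 * V ω ^ 2) + (6*θ * (U ω ^ 2 * U' ω ^ 1 * V ω ^ 1))))) ∂ℙ
        = (∫ ω, 3 * (U ω ^ 1 * U' ω ^ 2 * V ω ^ 1) ∂ℙ) + ∫ ω, 3*θ * (U ω ^ 2 * U' ω ^ 0 * V ω ^ 2) + (3 * (U ω ^ 1 * U' ω ^ 1 * V ω ^ 2) + (6*θ * (U ω ^ 2 * U' ω ^ 1 * V ω ^ 1))) ∂ℙ :=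
      integral_add (I (3) 1 2 1) S7
    have ES7 : ∫ ω, (3*θ * (U ω ^ 2 * U' ω ^ 0 * V ω ^ 2) + (3 * (U ω ^ 1 * U' ω ^ 1 * V ω ^ 2) + (6*θ * (U ω ^ 2 * U' ω ^ 1 * V ω ^ 1)))) ∂ℙ
        = (∫ ω, 3*θ * (U ω ^ 2 * U' ω ^ 0 * V ω ^ 2) ∂ℙ) + ∫ ω, 3 * (U ω ^ 1 * U' ω ^ 1 * V ω ^ 2) + (6*θ * (U ω ^ 2 * U' ω ^ 1 * V ω ^ 1)) ∂ℙ :=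
      integral_add (I (3*θ) 2 0 2) S8
    have ES8 : ∫ ω, (3 * (U ω ^ 1 * U' ω ^ 1 * V ω ^ 2) + (6*θ * (U ω ^ 2 * U' ω ^ 1 * V ω ^ 1))) ∂ℙ
        = (∫ ω, 3 * (U ω ^ 1 * U' ω ^ 1 * V ω ^ 2) ∂ℙ) + ∫ ω, 6*θ * (U ω ^ 2 * U' ω ^ 1 * V ω ^ 1) ∂ℙ :=
      integral_add (I (3) 1 1 2) S9
    rw [hre, ES0, ES1, ES2, ES3, ES4, ES5, ES6, ES7, ES8]
    simp only [integral_const_mul, (fact _ _ _).2]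
    simp only [EU0, EU1, EU2, EU3, EU4, EU'0, EU'1, EU'2, EU'3, EU'4, EV0, EV1, EV2, EV3]
    rw [hσu2]
    ring
  · have hre : (fun ω => Y ω * U' ω) = fun ω =>
        θ^3 * (U ω ^ 3 * U' ω ^ 1 * V ω ^ 0) + (1 * (U ω ^ 0 * U' ω ^ 4 * V ω ^ 0) + (1 * (U ω ^ 0 * U' ω ^ 1 * V ω ^ 3) + (3*θ^2 * (U ω ^ 2 * U' ω ^ 2 * V ω ^ 0) + (3*θ^2 * (U ω ^ 2 * U' ω ^ 1 * V ω ^ 1) + (3*θ * (U ω ^ 1 * U' ω ^ 3 * V ω ^ 0) + (3 * (U ω ^ 0 * U' ω ^ 3 * V ω ^ 1) + (3*θ * (U ω ^ 1 * U' ω ^ 1 * V ω ^ 2) + (3 * (U ω ^ 0 * U' ω ^ 2 * V ω ^ 2) + (6*θ * (U ω ^ 1 * U' ω ^ 2 * V ω ^ 1)))))))))) := by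
      funext ω; rw [hY]; ring
    have T9 : Integrable (fun ω => 6*θ * (U ω ^ 1 * U' ω ^ 2 * V ω ^ 1)) ℙ := by
      exact I (6*θ) 1 2 1
    have T8 : Integrable (fun ω => 3 * (U ω ^ 0 * U' ω ^ 2 * V ω ^ 2) + (6*θ * (U ω ^ 1 * U' ω ^ 2 * V ω ^ 1))) ℙ := by
      exact (I (3) 0 2 2).add T9
    have T7 : Integrable (fun ω => 3*θ * (U ω ^ 1 * U' ω ^ 1 * V ω ^ 2) + (3 * (U ω ^ 0 * U' ω ^ 2 * V ω ^ 2) + (6*θ * (U ω ^ 1 * U' ω ^ 2 * V ω ^ 1)))) ℙ := by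
      exact (I (3*θ) 1 1 2).add T8
    have T6 : Integrable (fun ω => 3 * (U ω ^ 0 * U' ω ^ 3 * V ω ^ 1) + (3*θ * (U ω ^ 1 * U' ω ^ 1 * V ω ^ 2) + (3 * (U ω ^ 0 * U' ω ^ 2 * V ω ^ 2) + (6*θ * (U ω ^ 1 * U' ω ^ 2 * V ω ^ 1))))) ℙ := by
      exact (I (3) 0 3 1).add T7
    have T5 : Integrable (fun ω => 3*θ * (U ω ^ 1 * U' ω ^ 3 * V ω ^ 0) + (3 * (U ω ^ 0 * U' ω ^ 3 * V ω ^ 1) + (3*θ * (U ω ^ 1 * U' ω ^ 1 * V ω ^ 2) + (3 * (U ω ^ 0 * U' ω ^ 2 * V ω ^ 2) + (6*θ * (U ω ^ 1 * U' ω ^ 2 * V ω ^ 1)))))) ℙ := by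
      exact (I (3*θ) 1 3 0).add T6
    have T4 : Integrable (fun ω => 3*θ^2 * (U ω ^ 2 * U' ω ^ 1 * V ω ^ 1) + (3*θ * (U ω ^ 1 * U' ω ^ 3 * V ω ^ 0) + (3 * (U ω ^ 0 * U' ω ^ 3 * V ω ^ 1) + (3*θ * (U ω ^ 1 * U' ω ^ 1 * V ω ^ 2) + (3 * (U ω ^ 0 * U' ω ^ 2 * V ω ^ 2) + (6*θ * (U ω ^ 1 * U' ω ^ 2 * V ω ^ 1))))))) ℙ := by
      exact (I (3*θ^2) 2 1 1).add T5
    have T3 : Integrable (fun ω => 3*θ^2 * (U ω ^ 2 * U' ω ^ 2 * V ω ^ 0) + (3*θ^2 * (U ω ^ 2 * U' ω ^ 1 * V ω ^ 1) + (3*θ * (U ω ^ 1 * U' ω ^ 3 * V ω ^ 0) + (3 * (U ω ^ 0 * U' ω ^ 3 * V ω ^ 1) + (3*θ * (U ω ^ 1 * U' ω ^ 1 * V ω ^ 2) + (3 * (U ω ^ 0 * U' ω ^ 2 * V ω ^ 2) + (6*θ * (U ω ^ 1 * U' ω ^ 2 * V ω ^ 1)))))))) ℙ := by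
      exact (I (3*θ^2) 2 2 0).add T4
    have T2 : Integrable (fun ω => 1 * (U ω ^ 0 * U' ω ^ 1 * V ω ^ 3) + (3*θ^2 * (U ω ^ 2 * U' ω ^ 2 * V ω ^ 0) + (3*θ^2 * (U ω ^ 2 * U' ω ^ 1 * V ω ^ 1) + (3*θ * (U ω ^ 1 * U' ω ^ 3 * V ω ^ 0) + (3 * (U ω ^ 0 * U' ω ^ 3 * V ω ^ 1) + (3*θ * (U ω ^ 1 * U' ω ^ 1 * V ω ^ 2) + (3 * (U ω ^ 0 * U' ω ^ 2 * V ω ^ 2) + (6*θ * (U ω ^ 1 * U' ω ^ 2 * V ω ^ 1))))))))) ℙ := by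
      exact (I (1) 0 1 3).add T3
    have T1 : Integrable (fun ω => 1 * (U ω ^ 0 * U' ω ^ 4 * V ω ^ 0) + (1 * (U ω ^ 0 * U' ω ^ 1 * V ω ^ 3) + (3*θ^2 * (U ω ^ 2 * U' ω ^ 2 * V ω ^ 0) + (3*θ^2 * (U ω ^ 2 * U' ω ^ 1 * V ω ^ 1) + (3*θ * (U ω ^ 1 * U' ω ^ 3 * V ω ^ 0) + (3 * (U ω ^ 0 * U' ω ^ 3 * V ω ^ 1) + (3*θ * (U ω ^ 1 * U' ω ^ 1 * V ω ^ 2) + (3 * (U ω ^ 0 * U' ω ^ 2 * V ω ^ 2) + (6*θ * (U ω ^ 1 * U' ω ^ 2 * V ω ^ 1)))))))))) ℙ := by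
      exact (I (1) 0 4 0).add T2
    have ET0 : ∫ ω, (θ^3 * (U ω ^ 3 * U' ω ^ 1 * V ω ^ 0) + (1 * (U ω ^ 0 * U' ω ^ 4 * V ω ^ 0) + (1 * (U ω ^ 0 * U' ω ^ 1 * V ω ^ 3) + (3*θ^2 * (U ω ^ 2 * U' ω ^ 2 * V ω ^ 0) + (3*θ^2 * (U ω ^ 2 * U' ω ^ 1 * V ω ^ 1) + (3*θ * (U ω ^ 1 * U' ω ^ 3 * V ω ^ 0) + (3 * (U ω ^ 0 * U' ω ^ 3 * V ω ^ 1) + (3*θ * (U ω ^ 1 * U' ω ^ 1 * V ω ^ 2) + (3 * (U ω ^ 0 * U' ω ^ 2 * V ω ^ 2) + (6*θ * (U ω ^ 1 * U' ω ^ 2 * V ω ^ 1))))))))))) ∂ℙ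
        = (∫ ω, θ^3 * (U ω ^ 3 * U' ω ^ 1 * V ω ^ 0) ∂ℙ) + ∫ ω, 1 * (U ω ^ 0 * U' ω ^ 4 * V ω ^ 0) + (1 * (U ω ^ 0 * U' ω ^ 1 * V ω ^ 3) + (3*θ^2 * (U ω ^ 2 * U' ω ^ 2 * V ω ^ 0) + (3*θ^2 * (U ω ^ 2 * U' ω ^ 1 * V ω ^ 1) + (3*θ * (U ω ^ 1 * U' ω ^ 3 * V ω ^ 0) + (3 * (U ω ^ 0 * U' ω ^ 3 * V ω ^ 1) + (3*θ * (U ω ^ 1 * U' ω ^ 1 * V ω ^ 2) + (3 * (U ω ^ 0 * U' ω ^ 2 * V ω ^ 2) + (6*θ * (U ω ^ 1 * U' ω ^ 2 * V ω ^ 1))))))))) ∂ℙ :=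
      integral_add (I (θ^3) 3 1 0) T1
    have ET1 : ∫ ω, (1 * (U ω ^ 0 * U' ω ^ 4 * V ω ^ 0) + (1 * (U ω ^ 0 * U' ω ^ 1 * V ω ^ 3) + (3*θ^2 * (U ω ^ 2 * U' ω ^ 2 * V ω ^ 0) + (3*θ^2 * (U ω ^ 2 * U' ω ^ 1 * V ω ^ 1) + (3*θ * (U ω ^ 1 * U' ω ^ 3 * V ω ^ 0) + (3 * (U ω ^ 0 * U' ω ^ 3 * V ω ^ 1) + (3*θ * (U ω ^ 1 * U' ω ^ 1 * V ω ^ 2) + (3 * (U ω ^ 0 * U' ω ^ 2 * V ω ^ 2) + (6*θ * (U ω ^ 1 * U' ω ^ 2 * V ω ^ 1)))))))))) ∂ℙ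
        = (∫ ω, 1 * (U ω ^ 0 * U' ω ^ 4 * V ω ^ 0) ∂ℙ) + ∫ ω, 1 * (U ω ^ 0 * U' ω ^ 1 * V ω ^ 3) + (3*θ^2 * (U ω ^ 2 * U' ω ^ 2 * V ω ^ 0) + (3*θ^2 * (U ω ^ 2 * U' ω ^ 1 * V ω ^ 1) + (3*θ * (U ω ^ 1 * U' ω ^ 3 * V ω ^ 0) + (3 * (U ω ^ 0 * U' ω ^ 3 * V ω ^ 1) + (3*θ * (U ω ^ 1 * U' ω ^ 1 * V ω ^ 2) + (3 * (U ω ^ 0 * U' ω ^ 2 * V ω ^ 2) + (6*θ * (U ω ^ 1 * U' ω ^ 2 * V ω ^ 1)))))))) ∂ℙ :=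
      integral_add (I (1) 0 4 0) T2
    have ET2 : ∫ ω, (1 * (U ω ^ 0 * U' ω ^ 1 * V ω ^ 3) + (3*θ^2 * (U ω ^ 2 * U' ω ^ 2 * V ω ^ 0) + (3*θ^2 * (U ω ^ 2 * U' ω ^ 1 * V ω ^ 1) + (3*θ * (U ω ^ 1 * U' ω ^ 3 * V ω ^ 0) + (3 * (U ω ^ 0 * U' ω ^ 3 * V ω ^ 1) + (3*θ * (U ω ^ 1 * U' ω ^ 1 * V ω ^ 2) + (3 * (U ω ^ 0 * U' ω ^ 2 * V ω ^ 2) + (6*θ * (U ω ^ 1 * U' ω ^ 2 * V ω ^ 1))))))))) ∂ℙ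
        = (∫ ω, 1 * (U ω ^ 0 * U' ω ^ 1 * V ω ^ 3) ∂ℙ) + ∫ ω, 3*θ^2 * (U ω ^ 2 * U' ω ^ 2 * V ω ^ 0) + (3*θ^2 * (U ω ^ 2 * U' ω ^ 1 * V ω ^ 1) + (3*θ * (U ω ^ 1 * U' ω ^ 3 * V ω ^ 0) + (3 * (U ω ^ 0 * U' ω ^ 3 * V ω ^ 1) + (3*θ * (U ω ^ 1 * U' ω ^ 1 * V ω ^ 2) + (3 * (U ω ^ 0 * U' ω ^ 2 * V ω ^ 2) + (6*θ * (U ω ^ 1 * U' ω ^ 2 * V ω ^ 1))))))) ∂ℙ :=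
      integral_add (I (1) 0 1 3) T3
    have ET3 : ∫ ω, (3*θ^2 * (U ω ^ 2 * U' ω ^ 2 * V ω ^ 0) + (3*θ^2 * (U ω ^ 2 * U' ω ^ 1 * V ω ^ 1) + (3*θ * (U ω ^ 1 * U' ω ^ 3 * V ω ^ 0) + (3 * (U ω ^ 0 * U' ω ^ 3 * V ω ^ 1) + (3*θ * (U ω ^ 1 * U' ω ^ 1 * V ω ^ 2) + (3 * (U ω ^ 0 * U' ω ^ 2 * V ω ^ 2) + (6*θ * (U ω ^ 1 * U' ω ^ 2 * V ω ^ 1)))))))) ∂ℙ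
        = (∫ ω, 3*θ^2 * (U ω ^ 2 * U' ω ^ 2 * V ω ^ 0) ∂ℙ) + ∫ ω, 3*θ^2 * (U ω ^ 2 * U' ω ^ 1 * V ω ^ 1) + (3*θ * (U ω ^ 1 * U' ω ^ 3 * V ω ^ 0) + (3 * (U ω ^ 0 * U' ω ^ 3 * V ω ^ 1) + (3*θ * (U ω ^ 1 * U' ω ^ 1 * V ω ^ 2) + (3 * (U ω ^ 0 * U' ω ^ 2 * V ω ^ 2) + (6*θ * (U ω ^ 1 * U' ω ^ 2 * V ω ^ 1)))))) ∂ℙ :=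
      integral_add (I (3*θ^2) 2 2 0) T4
    have ET4 : ∫ ω, (3*θ^2 * (U ω ^ 2 * U' ω ^ 1 * V ω ^ 1) + (3*θ * (U ω ^ 1 * U' ω ^ 3 * V ω ^ 0) + (3 * (U ω ^ 0 * U' ω ^ 3 * V ω ^ 1) + (3*θ * (U ω ^ 1 * U' ω ^ 1 * V ω ^ 2) + (3 * (U ω ^ 0 * U' ω ^ 2 * V ω ^ 2) + (6*θ * (U ω ^ 1 * U' ω ^ 2 * V ω ^ 1))))))) ∂ℙ
        = (∫ ω, 3*θ^2 * (U ω ^ 2 * U' ω ^ 1 * V ω ^ 1) ∂ℙ) + ∫ ω, 3*θ * (U ω ^ 1 * U' ω ^ 3 * V ω ^ 0) + (3 * (U ω ^ 0 * U' ω ^ 3 * V ω ^ 1) + (3*θ * (U ω ^ 1 * U' ω ^ 1 * V ω ^ 2) + (3 * (U ω ^ 0 * U' ω ^ 2 * V ω ^ 2) + (6*θ * (U ω ^ 1 * U' ω ^ 2 * V ω ^ 1))))) ∂ℙ :=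
      integral_add (I (3*θ^2) 2 1 1) T5
    have ET5 : ∫ ω, (3*θ * (U ω ^ 1 * U' ω ^ 3 * V ω ^ 0) + (3 * (U ω ^ 0 * U' ω ^ 3 * V ω ^ 1) + (3*θ * (U ω ^ 1 * U' ω ^ 1 * V ω ^ 2) + (3 * (U ω ^ 0 * U' ω ^ 2 * V ω ^ 2) + (6*θ * (U ω ^ 1 * U' ω ^ 2 * V ω ^ 1)))))) ∂ℙ
        = (∫ ω, 3*θ * (U ω ^ 1 * U' ω ^ 3 * V ω ^ 0) ∂ℙ) + ∫ ω, 3 * (U ω ^ 0 * U' ω ^ 3 * V ω ^ 1) + (3*θ * (U ω ^ 1 * U' ω ^ 1 * V ω ^ 2) + (3 * (U ω ^ 0 * U' ω ^ 2 * V ω ^ 2) + (6*θ * (U ω ^ 1 * U' ω ^ 2 * V ω ^ 1)))) ∂ℙ :=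
      integral_add (I (3*θ) 1 3 0) T6
    have ET6 : ∫ ω, (3 * (U ω ^ 0 * U' ω ^ 3 * V ω ^ 1) + (3*θ * (U ω ^ 1 * U' ω ^ 1 * V ω ^ 2) + (3 * (U ω ^ 0 * U' ω ^ 2 * V ω ^ 2) + (6*θ * (U ω ^ 1 * U' ω ^ 2 * V ω ^ 1))))) ∂ℙ
        = (∫ ω, 3 * (U ω ^ 0 * U' ω ^ 3 * V ω ^ 1) ∂ℙ) + ∫ ω, 3*θ * (U ω ^ 1 * U' ω ^ 1 * V ω ^ 2) + (3 * (U ω ^ 0 * U' ω ^ 2 * V ω ^ 2) + (6*θ * (U ω ^ 1 * U' ω ^ 2 * V ω ^ 1))) ∂ℙ :=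
      integral_add (I (3) 0 3 1) T7
    have ET7 : ∫ ω, (3*θ * (U ω ^ 1 * U' ω ^ 1 * V ω ^ 2) + (3 * (U ω ^ 0 * U' ω ^ 2 * V ω ^ 2) + (6*θ * (U ω ^ 1 * U' ω ^ 2 * V ω ^ 1)))) ∂ℙ
        = (∫ ω, 3*θ * (U ω ^ 1 * U' ω ^ 1 * V ω ^ 2) ∂ℙ) + ∫ ω, 3 * (U ω ^ 0 * U' ω ^ 2 * V ω ^ 2) + (6*θ * (U ω ^ 1 * U' ω ^ 2 * V ω ^ 1)) ∂ℙ :=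
      integral_add (I (3*θ) 1 1 2) T8
    have ET8 : ∫ ω, (3 * (U ω ^ 0 * U' ω ^ 2 * V ω ^ 2) + (6*θ * (U ω ^ 1 * U' ω ^ 2 * V ω ^ 1))) ∂ℙ
        = (∫ ω, 3 * (U ω ^ 0 * U' ω ^ 2 * V ω ^ 2) ∂ℙ) + ∫ ω, 6*θ * (U ω ^ 1 * U' ω ^ 2 * V ω ^ 1) ∂ℙ :=
      integral_add (I (3) 0 2 2) T9
    rw [hre, ET0, ET1, ET2, ET3, ET4, ET5, ET6, ET7, ET8]
    simp only [integral_const_mul, (fact _ _ _).2]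
    simp only [EU0, EU1, EU2, EU3, EU4, EU'0, EU'1, EU'2, EU'3, EU'4, EV0, EV1, EV2, EV3]
    rw [hσu2]
    ring
end

section
/- Let m, n be positive natural numbers with n ≤ m, let G be a real m×n matrix of full column rank, and let P and W̃ be symmetric positive definite real m×m matrices. Then (GᵀW̃G)⁻¹ GᵀW̃ P W̃G (GᵀW̃G)⁻¹ − (Gᵀ P⁻¹ G)⁻¹ is positive semidefinite; that is, the choice W̃ = P⁻¹ minimizes, in the positive semidefinite (Loewner) order, the matrix (GᵀW̃G)⁻¹ GᵀW̃ P W̃G (GᵀW̃G)⁻¹ over all symmetric positive definite weighting matrices W̃. -/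
open Matrix

lemma aux_inj (m n : ℕ) (G : Matrix (Fin m) (Fin n) ℝ) (hG : G.rank = n) :
    Function.Injective G.mulVec := by
  rw [← coe_mulVecLin, ← LinearMap.ker_eq_bot]
  have h := LinearMap.finrank_range_add_finrank_ker G.mulVecLin
  rw [Matrix.rank] at hG
  rw [hG] at h
  have hfr : Module.finrank ℝ (Fin n → ℝ) = n := by simp
  rw [hfr] at h
  exact Submodule.finrank_eq_zero.mp (by omega)

lemma aux_posdef {m n : ℕ} (G : Matrix (Fin m) (Fin n) ℝ) {W : Matrix (Fin m) (Fin m) ℝ}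
    (hW : W.PosDef) (hG : Function.Injective G.mulVec) : (Gᵀ * (W * G)).PosDef := by
  rw [← Matrix.mul_assoc]
  refine PosDef.of_dotProduct_mulVec_pos ?_ ?_
  · have := isHermitian_conjTranspose_mul_mul G hW.1
    simpa using this
  · intro x hx
    have hGx : G *ᵥ x ≠ 0 := fun h => hx (by simpa using hG (h.trans (G.mulVec_zero).symm))
    have h2 := hW.dotProduct_mulVec_pos hGx
    simp only [star_trivial, dotProduct_mulVec] at h2 ⊢
    rw [← vecMul_vecMul, ← vecMul_vecMul, vecMul_transpose]
    exact h2

/-- Optimality of the weighting matrix in indirect inference: for `G` of full column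
rank and `P`, `W̃` symmetric positive definite,
`(GᵀW̃G)⁻¹GᵀW̃PW̃G(GᵀW̃G)⁻¹ − (GᵀP⁻¹G)⁻¹` is positive semidefinite, i.e. the choice
`W̃ = P⁻¹` minimizes the asymptotic covariance in the Loewner order. -/
theorem optimal_weighting_indirect_inference (m n : ℕ) (hm : 0 < m) (hn : 0 < n)
    (hnm : n ≤ m) (G : Matrix (Fin m) (Fin n) ℝ) (hG : G.rank = n)
    (P W : Matrix (Fin m) (Fin m) ℝ) (hP : P.PosDef) (hW : W.PosDef) :
    ((Gᵀ * W * G)⁻¹ * Gᵀ * W * P * W * G * (Gᵀ * W * G)⁻¹ -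
      (Gᵀ * P⁻¹ * G)⁻¹).PosSemidef := by
  have hGinj : Function.Injective G.mulVec := aux_inj m n G hG
  have hPi : P⁻¹.PosDef := hP.inv
  simp only [Matrix.mul_assoc]
  set A : Matrix (Fin n) (Fin n) ℝ := Gᵀ * (W * G) with hAdef
  set B : Matrix (Fin n) (Fin n) ℝ := Gᵀ * (P⁻¹ * G) with hBdef
  have hA : A.PosDef := aux_posdef G hW hGinj
  have hB : B.PosDef := aux_posdef G hPi hGinj
  haveI : Invertible P := P.invertibleOfIsUnitDet hP.det_pos.ne'.isUnit
  haveI : Invertible A := A.invertibleOfIsUnitDet hA.det_pos.ne'.isUnit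
  haveI : Invertible B := B.invertibleOfIsUnitDet hB.det_pos.ne'.isUnit
  have hWt : Wᵀ = W := hW.1
  have hPit : (P⁻¹)ᵀ = P⁻¹ := hPi.1
  have hAit : (A⁻¹)ᵀ = A⁻¹ := by rw [transpose_nonsing_inv]; congr 1; exact hA.1
  have hBit : (B⁻¹)ᵀ = B⁻¹ := by rw [transpose_nonsing_inv]; congr 1; exact hB.1
  set D : Matrix (Fin n) (Fin m) ℝ := A⁻¹ * (Gᵀ * W) - B⁻¹ * (Gᵀ * P⁻¹) with hDdef
  have hDt : Dᵀ = W * (G * A⁻¹) - P⁻¹ * (G * B⁻¹) := by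
    rw [hDdef]
    simp only [transpose_sub, transpose_mul, transpose_transpose, hWt, hPit, hAit, hBit,
      Matrix.mul_assoc]
  have c1 : ∀ X : Matrix (Fin m) (Fin n) ℝ, P * (P⁻¹ * X) = X := fun X => by
    rw [← Matrix.mul_assoc, Matrix.mul_inv_of_invertible, Matrix.one_mul]
  have c2 : ∀ X : Matrix (Fin m) (Fin n) ℝ, P⁻¹ * (P * X) = X := fun X => by
    rw [← Matrix.mul_assoc, Matrix.inv_mul_of_invertible, Matrix.one_mul]
  have cA : ∀ X : Matrix (Fin n) (Fin n) ℝ, Gᵀ * (W * (G * X)) = A * X := fun X => by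
    rw [hAdef, Matrix.mul_assoc, Matrix.mul_assoc]
  have cB : ∀ X : Matrix (Fin n) (Fin n) ℝ, Gᵀ * (P⁻¹ * (G * X)) = B * X := fun X => by
    rw [hBdef, Matrix.mul_assoc, Matrix.mul_assoc]
  have c6 : ∀ X : Matrix (Fin n) (Fin n) ℝ, A⁻¹ * (A * X) = X := fun X => by
    rw [← Matrix.mul_assoc, Matrix.inv_mul_of_invertible, Matrix.one_mul]
  have c7 : ∀ X : Matrix (Fin n) (Fin n) ℝ, B⁻¹ * (B * X) = X := fun X => by
    rw [← Matrix.mul_assoc, Matrix.inv_mul_of_invertible, Matrix.one_mul]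
  have key : D * P * Dᵀ = A⁻¹ * (Gᵀ * (W * (P * (W * (G * A⁻¹))))) - B⁻¹ := by
    rw [hDt, hDdef]
    simp only [Matrix.sub_mul, Matrix.mul_sub, Matrix.mul_assoc, c1, c2, cA, cB, c6, c7,
      Matrix.mul_inv_of_invertible, Matrix.mul_one]
    abel
  have hPSD := hP.posSemidef.mul_mul_conjTranspose_same D
  have hH : Dᴴ = Dᵀ := rfl
  rw [hH, key] at hPSD
  exact hPSD
end
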